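/- Eavesdropper MSE lower bound under the stability condition (Proposition 2, first bullet): assume π^∞_e is stationary for P_e (π^∞_{e,n} = Σ_m p_{e,mn} π^∞_{e,m} for all n) and ρ(𝒜_e) < 1, and let S = (S_1,…,S_N) be the (unique) N-tuple of positive semidefinite symmetric matrices satisfying S_n = 𝒮_{e,n}(S) for all n. Let Z_n(0), n = 1,…,N, be arbitrary positive semidefinite symmetric matrices and define Z_n(k+1) = Σ_{m=1}^N p_{e,mn} 𝒳_λ(Z_m(k), π^∞_{e,m}, γ̂_{e,m}). Then liminf_{k→∞} tr Z_n(k) ≥ tr S_n for every n = 1,…,N. -/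

import Mathlib

open Matrix Kronecker Filter

/-- The Riccati-type operator 𝒳_λ(X, α, φ). -/
noncomputable def calX {nx ny : ℕ} (A : Matrix (Fin nx) (Fin nx) ℝ)
    (L : Matrix (Fin ny) (Fin nx) ℝ) (Q : Matrix (Fin nx) (Fin nx) ℝ)
    (R : Matrix (Fin ny) (Fin ny) ℝ) (lam : ℝ) (X : Matrix (Fin nx) (Fin nx) ℝ)
    (al phi : ℝ) : Matrix (Fin nx) (Fin nx) ℝ :=
  (1 - lam * phi) • (A * X * Aᵀ + al • Q) +
    (lam * phi) •
      (A * X * Aᵀ + al • Q - A * X * Lᵀ * (L * X * Lᵀ + al • R)⁻¹ * (L * X * Aᵀ))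

/-- Loewner order: `X ⪯ Y` iff `Y - X` is positive semidefinite. -/
def loewnerLE {nx : ℕ} (X Y : Matrix (Fin nx) (Fin nx) ℝ) : Prop :=
  (Y - X).PosSemidef

/-- The trajectory of the coupled Riccati recursion
`Z_n(k+1) = ∑ m, p_{mn} 𝒳_λ(Z_m(k), α_m(k), γ_m)` started at `Y0`. -/
noncomputable def traj {nx ny N : ℕ} (A : Matrix (Fin nx) (Fin nx) ℝ)
    (L : Matrix (Fin ny) (Fin nx) ℝ) (Q : Matrix (Fin nx) (Fin nx) ℝ)
    (R : Matrix (Fin ny) (Fin ny) ℝ) (P : Matrix (Fin N) (Fin N) ℝ)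
    (γ : Fin N → ℝ) (α : Fin N → ℕ → ℝ) (lam : ℝ)
    (Y0 : Fin N → Matrix (Fin nx) (Fin nx) ℝ) : ℕ → Fin N → Matrix (Fin nx) (Fin nx) ℝ
  | 0 => Y0
  | k + 1 => fun n =>
      ∑ m, P m n • calX A L Q R lam (traj A L Q R P γ α lam Y0 k m) (α m k) (γ m)

/-- The coupled Lyapunov operator
`𝒮_{e,n}(V) = ∑ m, p_{e,mn} (1 − λ γ̂_{e,m}) A V_m Aᵀ + π^∞_{e,n} Q`. -/
noncomputable def Sop {nx N : ℕ} (A Q : Matrix (Fin nx) (Fin nx) ℝ)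
    (Pe : Matrix (Fin N) (Fin N) ℝ) (γ : Fin N → ℝ) (lam : ℝ) (π : Fin N → ℝ)
    (V : Fin N → Matrix (Fin nx) (Fin nx) ℝ) (n : Fin N) :
    Matrix (Fin nx) (Fin nx) ℝ :=
  (∑ m, (Pe m n * (1 - lam * γ m)) • (A * V m * Aᵀ)) + π n • Q

/-- The coupled Lyapunov iteration started at the zero tuple. -/
noncomputable def Straj {nx N : ℕ} (A Q : Matrix (Fin nx) (Fin nx) ℝ)
    (Pe : Matrix (Fin N) (Fin N) ℝ) (γ : Fin N → ℝ) (lam : ℝ) (π : Fin N → ℝ) :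
    ℕ → Fin N → Matrix (Fin nx) (Fin nx) ℝ
  | 0 => fun _ => 0
  | k + 1 => fun n => Sop A Q Pe γ lam π (Straj A Q Pe γ lam π k) n

/-- Block diagonal matrix (direct sum) of `N` matrices on the index set `I`. -/
def blkDiag {N : ℕ} {I : Type}
    (f : Fin N → Matrix I I ℝ) : Matrix (Fin N × I) (Fin N × I) ℝ :=
  Matrix.of fun p q => if p.1 = q.1 then f p.1 p.2 q.2 else 0

/-- The matrix `𝒜_e = (P_eᵀ ⊗ I_{n_x²}) · blkdiag_m ((1 − λ γ̂_{e,m}) (A ⊗ A))`. -/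
noncomputable def calAe {nx N : ℕ} (A : Matrix (Fin nx) (Fin nx) ℝ)
    (Pe : Matrix (Fin N) (Fin N) ℝ) (γ : Fin N → ℝ) (lam : ℝ) :
    Matrix (Fin N × (Fin nx × Fin nx)) (Fin N × (Fin nx × Fin nx)) ℝ :=
  (Peᵀ ⊗ₖ (1 : Matrix (Fin nx × Fin nx) (Fin nx × Fin nx) ℝ)) *
    blkDiag (fun m => (1 - lam * γ m) • (A ⊗ₖ A))

/-- Spectral radius of a real square matrix: the largest absolute value of its
(complex) eigenvalues. -/
noncomputable def specRad {ι : Type} [Fintype ι] [DecidableEq ι]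
    (M : Matrix ι ι ℝ) : ℝ :=
  sSup {r : ℝ | ∃ μ ∈ spectrum ℂ (M.map (Complex.ofReal ·)), r = ‖μ‖}

/-! ### Auxiliary lemmas -/

open scoped NNReal ENNReal

namespace StmtAux

lemma psd_smul {n : ℕ} {c : ℝ} {M : Matrix (Fin n) (Fin n) ℝ} (hc : 0 ≤ c)
    (hM : M.PosSemidef) : (c • M).PosSemidef := by
  refine Matrix.PosSemidef.of_dotProduct_mulVec_nonneg ?_ fun x => ?_
  · unfold Matrix.IsHermitian
    rw [conjTranspose_smul, hM.1]
    simp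
  · rw [Matrix.smul_mulVec, dotProduct_smul, smul_eq_mul]
    exact mul_nonneg hc (hM.dotProduct_mulVec_nonneg x)

lemma posdef_smul {n : ℕ} {c : ℝ} {M : Matrix (Fin n) (Fin n) ℝ} (hc : 0 < c)
    (hM : M.PosDef) : (c • M).PosDef := by
  refine Matrix.PosDef.of_dotProduct_mulVec_pos ?_ fun x hx => ?_
  · unfold Matrix.IsHermitian
    rw [conjTranspose_smul, hM.1]
    simp
  · rw [Matrix.smul_mulVec, dotProduct_smul, smul_eq_mul]
    exact mul_pos hc (hM.dotProduct_mulVec_pos hx)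

lemma psd_diag_nonneg {n : ℕ} {M : Matrix (Fin n) (Fin n) ℝ} (hM : M.PosSemidef) (i : Fin n) :
    0 ≤ M i i := by
  simpa using hM.dotProduct_mulVec_nonneg (Pi.single i 1)

lemma psd_trace_nonneg {n : ℕ} {M : Matrix (Fin n) (Fin n) ℝ} (hM : M.PosSemidef) :
    0 ≤ M.trace :=
  Finset.sum_nonneg fun i _ => psd_diag_nonneg hM i

lemma psd_conj {n m : Type*} [Fintype n] [Fintype m] {X : Matrix n n ℝ} (hX : X.PosSemidef)
    (B : Matrix m n ℝ) : (B * X * Bᵀ).PosSemidef := by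
  simpa using hX.mul_mul_conjTranspose_same B

lemma psd_sum {κ : Type*} {n : ℕ} (s : Finset κ) (f : κ → Matrix (Fin n) (Fin n) ℝ)
    (h : ∀ i ∈ s, (f i).PosSemidef) : (∑ i ∈ s, f i).PosSemidef :=
  Finset.sum_induction f _ (fun _ _ ha hb => ha.add hb) Matrix.PosSemidef.zero h

lemma loewner_trans {n : ℕ} {X Y Z : Matrix (Fin n) (Fin n) ℝ}
    (h1 : loewnerLE X Y) (h2 : loewnerLE Y Z) : loewnerLE X Z := by
  have := h2.add h1
  simpa [loewnerLE, sub_add_sub_cancel] using this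

lemma key_psd {nx ny : ℕ} {X : Matrix (Fin nx) (Fin nx) ℝ} (L : Matrix (Fin ny) (Fin nx) ℝ)
    {R : Matrix (Fin ny) (Fin ny) ℝ} {al : ℝ} (hX : X.PosSemidef) (hR : R.PosDef)
    (hal : 0 < al) :
    (X - X * Lᵀ * (L * X * Lᵀ + al • R)⁻¹ * (L * X)).PosSemidef := by
  have hLXL : (L * X * Lᵀ).PosSemidef := psd_conj hX L
  have hM : (L * X * Lᵀ + al • R).PosDef :=
    Matrix.PosDef.posSemidef_add hLXL (posdef_smul hal hR)
  haveI := hM.isUnit.invertible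
  have hXT : Xᵀ = X := hX.1
  have hblock : (Matrix.fromBlocks (L * X * Lᵀ + al • R) (L * X) (L * X)ᴴ X).PosSemidef := by
    have h1 : (Matrix.fromBlocks (L * X * Lᵀ) (L * X) (X * Lᵀ) X).PosSemidef := by
      have := psd_conj hX (Matrix.fromRows L (1 : Matrix (Fin nx) (Fin nx) ℝ))
      simpa [Matrix.fromRows_mul, Matrix.transpose_fromRows, Matrix.fromRows_mul_fromCols,
        Matrix.mul_one, Matrix.one_mul] using this
    have h2 : (Matrix.fromBlocks (al • R) 0 0 (0 : Matrix (Fin nx) (Fin nx) ℝ)).PosSemidef := by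
      have h2' := psd_conj ((posdef_smul hal hR).posSemidef)
        (Matrix.fromRows (1 : Matrix (Fin ny) (Fin ny) ℝ) (0 : Matrix (Fin nx) (Fin ny) ℝ))
      have e : (Matrix.fromRows (1 : Matrix (Fin ny) (Fin ny) ℝ)
            (0 : Matrix (Fin nx) (Fin ny) ℝ)) * (al • R)
            * (Matrix.fromRows (1 : Matrix (Fin ny) (Fin ny) ℝ)
            (0 : Matrix (Fin nx) (Fin ny) ℝ))ᵀ
          = Matrix.fromBlocks (al • R) 0 0 (0 : Matrix (Fin nx) (Fin nx) ℝ) := by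
        rw [Matrix.transpose_fromRows, Matrix.fromRows_mul, Matrix.fromRows_mul_fromCols]
        simp
      rw [e] at h2'
      exact h2'
    have hLXH : (L * X)ᴴ = X * Lᵀ := by
      simp [Matrix.conjTranspose_mul, hXT]
    rw [hLXH]
    have : Matrix.fromBlocks (L * X * Lᵀ + al • R) (L * X) (X * Lᵀ) X
        = Matrix.fromBlocks (L * X * Lᵀ) (L * X) (X * Lᵀ) X
          + Matrix.fromBlocks (al • R) 0 0 0 := by
      simp [Matrix.fromBlocks_add]
    rw [this]
    exact h1.add h2
  have hres := (Matrix.PosDef.fromBlocks₁₁ (L * X) X hM).mp hblock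
  have hLXH : (L * X)ᴴ = X * Lᵀ := by simp [Matrix.conjTranspose_mul, hXT]
  rw [hLXH] at hres
  simpa [Matrix.mul_assoc] using hres

lemma calX_ge {nx ny : ℕ} (A : Matrix (Fin nx) (Fin nx) ℝ) (L : Matrix (Fin ny) (Fin nx) ℝ)
    (Q : Matrix (Fin nx) (Fin nx) ℝ) {R : Matrix (Fin ny) (Fin ny) ℝ} {lam phi al : ℝ}
    {X : Matrix (Fin nx) (Fin nx) ℝ} (hX : X.PosSemidef) (hR : R.PosDef) (hal : 0 < al)
    (hc : 0 ≤ lam * phi) :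
    loewnerLE ((1 - lam * phi) • (A * X * Aᵀ) + al • Q) (calX A L Q R lam X al phi) := by
  set M := (L * X * Lᵀ + al • R)⁻¹ with hM
  have hdiff : calX A L Q R lam X al phi - ((1 - lam * phi) • (A * X * Aᵀ) + al • Q)
      = (lam * phi) • (A * (X - X * Lᵀ * M * (L * X)) * Aᵀ) := by
    have h1 : A * (X - X * Lᵀ * M * (L * X)) * Aᵀ
        = A * X * Aᵀ - A * X * Lᵀ * M * (L * X * Aᵀ) := by
      simp only [Matrix.sub_mul, Matrix.mul_sub, Matrix.mul_assoc]
    rw [h1]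
    unfold calX
    module
  unfold loewnerLE
  rw [hdiff]
  exact psd_smul hc (psd_conj (key_psd L hX hR hal) A)

lemma calX_psd {nx ny : ℕ} (A : Matrix (Fin nx) (Fin nx) ℝ) (L : Matrix (Fin ny) (Fin nx) ℝ)
    {Q : Matrix (Fin nx) (Fin nx) ℝ} {R : Matrix (Fin ny) (Fin ny) ℝ} {lam phi al : ℝ}
    {X : Matrix (Fin nx) (Fin nx) ℝ} (hX : X.PosSemidef) (hQ : Q.PosSemidef) (hR : R.PosDef)
    (hal : 0 < al) (hc : 0 ≤ lam * phi) (hc1 : lam * phi ≤ 1) :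
    (calX A L Q R lam X al phi).PosSemidef := by
  have h0 : loewnerLE 0 ((1 - lam * phi) • (A * X * Aᵀ) + al • Q) := by
    unfold loewnerLE
    rw [sub_zero]
    exact (psd_smul (by linarith) (psd_conj hX A)).add (psd_smul hal.le hQ)
  have := loewner_trans h0 (calX_ge A L Q hX hR hal hc)
  simpa [loewnerLE, sub_zero] using this

lemma calAe_apply {nx N : ℕ} (A : Matrix (Fin nx) (Fin nx) ℝ)
    (Pe : Matrix (Fin N) (Fin N) ℝ) (γ : Fin N → ℝ) (lam : ℝ)
    (n m : Fin N) (p q : Fin nx × Fin nx) :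
    calAe A Pe γ lam (n, p) (m, q)
      = Pe m n * ((1 - lam * γ m) * (A p.1 q.1 * A p.2 q.2)) := by
  unfold calAe blkDiag
  rw [Matrix.mul_apply]
  rw [Fintype.sum_prod_type]
  simp only [Matrix.kroneckerMap_apply, Matrix.of_apply, Matrix.one_apply, Matrix.transpose_apply,
    Matrix.smul_apply, smul_eq_mul, mul_ite, mul_zero, ite_mul, zero_mul, one_mul]
  rw [Finset.sum_eq_single m]
  · simp
  · intro b _ hb
    simp [hb]
  · simp

lemma calAe_mulVec {nx N : ℕ} (A : Matrix (Fin nx) (Fin nx) ℝ)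
    (Pe : Matrix (Fin N) (Fin N) ℝ) (γ : Fin N → ℝ) (lam : ℝ)
    (w : Fin N × (Fin nx × Fin nx) → ℝ) (n : Fin N) (i j : Fin nx) :
    (calAe A Pe γ lam).mulVec w (n, (i, j))
      = ∑ m, (Pe m n * (1 - lam * γ m))
          * ((A * (Matrix.of fun a b => w (m, (a, b))) * Aᵀ) i j) := by
  rw [Matrix.mulVec, dotProduct, Fintype.sum_prod_type]
  refine Finset.sum_congr rfl fun m _ => ?_
  simp_rw [calAe_apply, Matrix.mul_apply, Matrix.transpose_apply, Matrix.of_apply,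
    Finset.sum_mul, Finset.mul_sum, Fintype.sum_prod_type]
  rw [Finset.sum_comm]
  exact Finset.sum_congr rfl fun y1 _ => Finset.sum_congr rfl fun y2 _ => by ring

section SpecRad
attribute [local instance] Matrix.linftyOpNormedRing Matrix.linftyOpNormedAlgebra

lemma entry_norm_le {ι : Type} [Fintype ι] [DecidableEq ι] (B : Matrix ι ι ℂ) (a b : ι) :
    ‖B a b‖ ≤ ‖B‖ := by
  have h1 : (‖B a b‖₊ : ℝ≥0) ≤ ‖B‖₊ := by
    rw [Matrix.linfty_opNNNorm_def]
    exact le_trans (Finset.single_le_sum (f := fun j => ‖B a j‖₊)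
      (fun _ _ => zero_le) (Finset.mem_univ b))
      (Finset.le_sup (f := fun i => ∑ j : ι, ‖B i j‖₊) (Finset.mem_univ a))
  exact_mod_cast h1

lemma pow_entry_tendsto_zero {ι : Type} [Fintype ι] [DecidableEq ι] [Nonempty ι]
    (M : Matrix ι ι ℝ) (h : specRad M < 1) (a b : ι) :
    Filter.Tendsto (fun k => (M ^ k) a b) Filter.atTop (nhds 0) := by
  haveI : CompleteSpace (Matrix ι ι ℂ) := FiniteDimensional.complete ℂ _
  set Mc : Matrix ι ι ℂ := M.map (Complex.ofReal ·) with hMc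
  have hmappow : ∀ k : ℕ, Mc ^ k = (M ^ k).map (Complex.ofReal ·) := by
    intro k
    have : Mc = (Complex.ofRealHom.mapMatrix : Matrix ι ι ℝ →+* Matrix ι ι ℂ) M := rfl
    rw [this, ← map_pow]
    rfl
  have hbdd : BddAbove {r : ℝ | ∃ μ ∈ spectrum ℂ Mc, r = ‖μ‖} := by
    have hset : {r : ℝ | ∃ μ ∈ spectrum ℂ Mc, r = ‖μ‖}
        = (‖·‖) '' spectrum ℂ Mc := by
      ext r
      simp [Set.mem_image, eq_comm]
    rw [hset]
    exact ((spectrum.isCompact (𝕜 := ℂ) Mc).image continuous_norm).bddAbove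
  have hsr : spectralRadius ℂ Mc ≤ ENNReal.ofReal (specRad M) := by
    rw [spectralRadius]
    refine iSup₂_le fun μ hμ => ?_
    have hle : ‖μ‖ ≤ specRad M := le_csSup hbdd ⟨μ, hμ, rfl⟩
    have : (‖μ‖₊ : ℝ≥0∞) = ENNReal.ofReal (‖μ‖) := by
      rw [ENNReal.ofReal]
      congr 1
      apply NNReal.eq
      rw [Real.coe_toNNReal _ (norm_nonneg μ)]
      exact coe_nnnorm μ
    rw [this]
    exact ENNReal.ofReal_le_ofReal hle
  have hlt : spectralRadius ℂ Mc < 1 :=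
    lt_of_le_of_lt hsr (by rwa [ENNReal.ofReal_lt_one])
  obtain ⟨r, hr1, hr2⟩ := ENNReal.lt_iff_exists_nnreal_btwn.mp hlt
  have hG := spectrum.pow_nnnorm_pow_one_div_tendsto_nhds_spectralRadius Mc
  have hev : ∀ᶠ (k : ℕ) in Filter.atTop, (‖Mc ^ k‖₊ : ℝ≥0∞) ^ (1 / (k : ℝ)) < (r : ℝ≥0∞) :=
    hG.eventually_lt_const hr1
  have hev2 : ∀ᶠ (k : ℕ) in Filter.atTop, ‖Mc ^ k‖ ≤ ((r : ℝ)) ^ k := by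
    filter_upwards [hev, Filter.eventually_ge_atTop 1] with k hk hk1
    have hk0 : (k : ℝ) ≠ 0 := by positivity
    have : ((‖Mc ^ k‖₊ : ℝ≥0∞) ^ (1 / (k : ℝ))) ^ (k : ℝ) ≤ ((r : ℝ≥0∞)) ^ (k : ℝ) :=
      ENNReal.rpow_le_rpow hk.le (by positivity)
    rw [← ENNReal.rpow_mul, one_div_mul_cancel hk0, ENNReal.rpow_one] at this
    rw [ENNReal.rpow_natCast, ← ENNReal.coe_pow, ENNReal.coe_le_coe] at this
    calc ‖Mc ^ k‖ = ((‖Mc ^ k‖₊ : ℝ≥0) : ℝ) := rfl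
      _ ≤ ((r ^ k : ℝ≥0) : ℝ) := by exact_mod_cast this
      _ = (r : ℝ) ^ k := by push_cast; ring
  have hrlt1 : (r : ℝ) < 1 := by
    have := ENNReal.coe_lt_coe.mp (by simpa using hr2)
    exact_mod_cast this
  have htendnorm : Filter.Tendsto (fun k => ‖Mc ^ k‖) Filter.atTop (nhds 0) := by
    have hpow : Filter.Tendsto (fun k : ℕ => ((r : ℝ)) ^ k) Filter.atTop (nhds 0) :=
      tendsto_pow_atTop_nhds_zero_of_lt_one r.coe_nonneg hrlt1
    exact squeeze_zero' (Filter.Eventually.of_forall fun k => norm_nonneg _) hev2 hpow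
  refine squeeze_zero_norm' ?_ htendnorm
  filter_upwards with k
  have h2 : ‖(Mc ^ k) a b‖ = ‖(M ^ k) a b‖ := by
    rw [hmappow, Matrix.map_apply, Complex.norm_real]
  rw [← h2]
  exact entry_norm_le _ a b

end SpecRad

end StmtAux

open StmtAux

theorem stmt_14 {nx ny N : ℕ} (hnx : 0 < nx) (hny : 0 < ny) (hN : 0 < N)
    (A : Matrix (Fin nx) (Fin nx) ℝ) (L : Matrix (Fin ny) (Fin nx) ℝ)
    (Q : Matrix (Fin nx) (Fin nx) ℝ) (R : Matrix (Fin ny) (Fin ny) ℝ)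
    (hQ : Q.PosDef) (hR : R.PosDef)
    (Pe : Matrix (Fin N) (Fin N) ℝ)
    (hPnonneg : ∀ m n, 0 ≤ Pe m n) (hProw : ∀ m, ∑ n, Pe m n = 1)
    (γ : Fin N → ℝ) (hγ : ∀ m, γ m ∈ Set.Icc (0 : ℝ) 1)
    (lam : ℝ) (hlam : lam ∈ Set.Icc (0 : ℝ) 1)
    (π : Fin N → ℝ) (hπ : ∀ n, 0 < π n)
    (hstat : ∀ n, π n = ∑ m, Pe m n * π m)
    (hρ : specRad (calAe A Pe γ lam) < 1)
    (S : Fin N → Matrix (Fin nx) (Fin nx) ℝ)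
    (hSpsd : ∀ n, (S n).PosSemidef)
    (hSfix : ∀ n, S n = Sop A Q Pe γ lam π S n)
    (Z0 : Fin N → Matrix (Fin nx) (Fin nx) ℝ) (hZ0 : ∀ n, (Z0 n).PosSemidef) :
    ∀ n : Fin N,
      ((S n).trace : EReal) ≤
        Filter.atTop.liminf
          (fun k => ((traj A L Q R Pe γ (fun m _ => π m) lam Z0 k n).trace : EReal)) := by
  haveI : NeZero N := ⟨hN.ne'⟩
  haveI : NeZero nx := ⟨hnx.ne'⟩
  intro n
  obtain ⟨hlam0, hlam1⟩ := hlam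
  have hc0 : ∀ m, 0 ≤ lam * γ m := fun m => mul_nonneg hlam0 (hγ m).1
  have hc1 : ∀ m, lam * γ m ≤ 1 := fun m => by
    have := (hγ m).1; have := (hγ m).2; nlinarith
  set Z : ℕ → Fin N → Matrix (Fin nx) (Fin nx) ℝ :=
    traj A L Q R Pe γ (fun m _ => π m) lam Z0 with hZdef
  set W : ℕ → Fin N → Matrix (Fin nx) (Fin nx) ℝ := Straj A Q Pe γ lam π with hWdef
  have hZsucc : ∀ (k : ℕ) (n' : Fin N),
      Z (k + 1) n' = ∑ m, Pe m n' • calX A L Q R lam (Z k m) (π m) (γ m) := by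
    intro k n'
    rw [hZdef]
    rfl
  have hWsucc : ∀ (k : ℕ) (n' : Fin N), W (k + 1) n' = Sop A Q Pe γ lam π (W k) n' := by
    intro k n'
    rw [hWdef]
    rfl
  -- Step 1: the trajectory dominates the Lyapunov iteration
  have hind : ∀ (k : ℕ) (n' : Fin N), (Z k n').PosSemidef ∧ loewnerLE (W k n') (Z k n') := by
    intro k
    induction k with
    | zero =>
      intro n'
      refine ⟨hZ0 n', ?_⟩
      show (Z 0 n' - W 0 n').PosSemidef
      have : W 0 n' = 0 := rfl
      rw [this, sub_zero]
      exact hZ0 n'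
    | succ k ih =>
      intro n'
      constructor
      · rw [hZsucc]
        exact psd_sum _ _ fun m _ => psd_smul (hPnonneg m n')
          (calX_psd A L (ih m).1 hQ.posSemidef hR (hπ m) (hc0 m) (hc1 m))
      · have hW1 : W (k + 1) n'
            = ∑ m, ((Pe m n' * (1 - lam * γ m)) • (A * W k m * Aᵀ) + (Pe m n' * π m) • Q) := by
          rw [hWsucc, Sop, hstat n', Finset.sum_smul, ← Finset.sum_add_distrib]
        show (Z (k + 1) n' - W (k + 1) n').PosSemidef
        rw [hW1, hZsucc, ← Finset.sum_sub_distrib]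
        refine psd_sum _ _ fun m _ => ?_
        have h1 : Pe m n' • calX A L Q R lam (Z k m) (π m) (γ m)
            - ((Pe m n' * (1 - lam * γ m)) • (A * W k m * Aᵀ) + (Pe m n' * π m) • Q)
            = Pe m n' • (calX A L Q R lam (Z k m) (π m) (γ m)
                - ((1 - lam * γ m) • (A * W k m * Aᵀ) + π m • Q)) := by
          module
        rw [h1]
        refine psd_smul (hPnonneg m n') ?_
        have h2 : calX A L Q R lam (Z k m) (π m) (γ m)
              - ((1 - lam * γ m) • (A * W k m * Aᵀ) + π m • Q)
            = (calX A L Q R lam (Z k m) (π m) (γ m)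
              - ((1 - lam * γ m) • (A * Z k m * Aᵀ) + π m • Q))
              + (1 - lam * γ m) • (A * (Z k m - W k m) * Aᵀ) := by
          have h3 : A * (Z k m - W k m) * Aᵀ = A * Z k m * Aᵀ - A * W k m * Aᵀ := by
            simp only [Matrix.sub_mul, Matrix.mul_sub]
          rw [h3]
          module
        rw [h2]
        exact (calX_ge A L Q (ih m).1 hR (hπ m) (hc0 m)).add
          (psd_smul (by have := hc1 m; linarith) (psd_conj (ih m).2 A))
  -- Step 2: vectorized evolution of the deficit S - W k
  set Mv := calAe A Pe γ lam with hMv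
  set v0 : Fin N × (Fin nx × Fin nx) → ℝ := fun q => S q.1 q.2.1 q.2.2 with hv0
  have hvec : ∀ (k : ℕ) (n' : Fin N) (i j : Fin nx),
      (S n' - W k n') i j = (Mv ^ k).mulVec v0 (n', (i, j)) := by
    intro k
    induction k with
    | zero =>
      intro n' i j
      have : W 0 n' = 0 := rfl
      rw [this, sub_zero, pow_zero, Matrix.one_mulVec]
    | succ k ih =>
      intro n' i j
      have hrec : S n' - W (k + 1) n'
          = ∑ m, (Pe m n' * (1 - lam * γ m)) • (A * (S m - W k m) * Aᵀ) := by
        conv_lhs => rw [hSfix n', hWsucc]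
        rw [Sop, Sop, add_sub_add_right_eq_sub, ← Finset.sum_sub_distrib]
        refine Finset.sum_congr rfl fun m _ => ?_
        rw [← smul_sub]
        congr 1
        simp only [Matrix.sub_mul, Matrix.mul_sub]
      rw [hrec]
      have hpow : (Mv ^ (k + 1)).mulVec v0 = Mv.mulVec ((Mv ^ k).mulVec v0) := by
        rw [Matrix.mulVec_mulVec, ← pow_succ']
      have hofm : ∀ m : Fin N,
          (Matrix.of fun a b => (Mv ^ k).mulVec v0 (m, (a, b))) = S m - W k m := by
        intro m
        ext a b
        rw [Matrix.of_apply, ← ih m a b]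
      rw [hpow, calAe_mulVec]
      simp_rw [hofm]
      rw [Matrix.sum_apply]
      exact Finset.sum_congr rfl fun m _ => by rw [Matrix.smul_apply, smul_eq_mul]
  -- Step 3: trace of W k n converges to trace of S n
  have hvk : ∀ x : Fin N × (Fin nx × Fin nx),
      Filter.Tendsto (fun k => (Mv ^ k).mulVec v0 x) Filter.atTop (nhds 0) := by
    intro x
    have hterm : ∀ y : Fin N × (Fin nx × Fin nx),
        Filter.Tendsto (fun k => (Mv ^ k) x y * v0 y) Filter.atTop (nhds 0) := by
      intro y
      simpa using (pow_entry_tendsto_zero Mv hρ x y).mul_const (v0 y)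
    have := tendsto_finset_sum Finset.univ fun y _ => hterm y
    simpa [Matrix.mulVec, dotProduct] using this
  have htrW : Filter.Tendsto (fun k => (W k n).trace) Filter.atTop (nhds ((S n).trace)) := by
    have h1 : ∀ k, (W k n).trace
        = (S n).trace - ∑ i, (Mv ^ k).mulVec v0 (n, (i, i)) := by
      intro k
      have h2 : (S n - W k n).trace = ∑ i, (Mv ^ k).mulVec v0 (n, (i, i)) := by
        rw [Matrix.trace]
        exact Finset.sum_congr rfl fun i _ => hvec k n i i
      rw [Matrix.trace_sub] at h2
      linarith
    have hsum : Filter.Tendsto (fun k => ∑ i, (Mv ^ k).mulVec v0 (n, (i, i)))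
        Filter.atTop (nhds 0) := by
      have := tendsto_finset_sum Finset.univ fun i _ => hvk (n, (i, i))
      simpa using this
    have := (tendsto_const_nhds (x := (S n).trace)
      (f := Filter.atTop (α := ℕ))).sub hsum
    rw [sub_zero] at this
    exact this.congr fun k => (h1 k).symm
  -- Step 4: conclude via liminf
  have htrle : ∀ k, (W k n).trace ≤ (Z k n).trace := by
    intro k
    have := psd_trace_nonneg (hind k n).2
    rw [Matrix.trace_sub] at this
    linarith
  have hWliminf : Filter.atTop.liminf (fun k => ((W k n).trace : EReal))
      = ((S n).trace : EReal) := by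
    apply Filter.Tendsto.liminf_eq
    rw [EReal.tendsto_coe]
    exact htrW
  calc ((S n).trace : EReal)
      = Filter.atTop.liminf (fun k => ((W k n).trace : EReal)) := hWliminf.symm
    _ ≤ Filter.atTop.liminf (fun k => ((Z k n).trace : EReal)) :=
        Filter.liminf_le_liminf
          (Filter.Eventually.of_forall fun k => EReal.coe_le_coe_iff.mpr (htrle k))
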